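/- Let A ∈ R^{m×n}, b ∈ R^m, x ∈ R^n, set s = Aᵀ(b − Ax), τ = { j : |s_j|² ≥ ‖s‖²/n } and η = Σ_{j∈τ} s_j e_j. If s ≠ 0 then Aη ≠ 0. -/
import Mathlib


open Matrix BigOperators Finset

theorem stmt_5 {m n : ℕ} (A : Matrix (Fin m) (Fin n) ℝ) (b : Fin m → ℝ) (x : Fin n → ℝ) :
    let s : Fin n → ℝ := Aᵀ.mulVec (b - A.mulVec x)
    let τ : Finset (Fin n) := Finset.univ.filter fun j => (s j) ^ 2 ≥ (∑ i, s i ^ 2) / n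
    let η : Fin n → ℝ := ∑ j ∈ τ, s j • (Pi.single j 1 : Fin n → ℝ)
    s ≠ 0 → A.mulVec η ≠ 0 := by
  intro s τ η hs hA
  -- s ⬝ᵥ η = 0
  have hdot : s ⬝ᵥ η = 0 := by
    have : s ⬝ᵥ η = (b - A.mulVec x) ⬝ᵥ A.mulVec η := by
      show Aᵀ.mulVec (b - A.mulVec x) ⬝ᵥ η = _
      rw [Matrix.mulVec_transpose, ← Matrix.dotProduct_mulVec]
    rw [this, hA, dotProduct_zero]
  -- s ⬝ᵥ η = ∑ j in τ, (s j)^2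
  have hcomp : s ⬝ᵥ η = ∑ j ∈ τ, (s j) ^ 2 := by
    simp only [dotProduct, η, Finset.sum_apply, Pi.smul_apply, smul_eq_mul]
    simp_rw [Finset.mul_sum]
    rw [Finset.sum_comm]
    refine Finset.sum_congr rfl fun j hj => ?_
    rw [Finset.sum_eq_single j]
    · simp [Pi.single_apply]; ring
    · intro i _ hi; simp [Pi.single_apply, hi]
    · simp
  -- total sum positive
  have hn : 0 < n := by
    rcases Nat.eq_zero_or_pos n with h | h
    · exfalso; apply hs; funext j; exact absurd j.2 (by omega)
    · exact h
  have htot : 0 < ∑ i, (s i) ^ 2 := by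
    rcases Function.ne_iff.mp hs with ⟨j, hj⟩
    exact Finset.sum_pos' (fun i _ => sq_nonneg _)
      ⟨j, Finset.mem_univ j, lt_of_le_of_ne (sq_nonneg _) (Ne.symm (pow_ne_zero 2 hj))⟩
  -- max element is in τ
  obtain ⟨j0, _, hj0⟩ := Finset.exists_max_image (Finset.univ : Finset (Fin n))
    (fun i => (s i) ^ 2) ⟨⟨0, hn⟩, Finset.mem_univ _⟩
  have hle : (∑ i, (s i) ^ 2) ≤ n * (s j0) ^ 2 := by
    calc (∑ i, (s i) ^ 2) ≤ ∑ _i : Fin n, (s j0) ^ 2 :=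
          Finset.sum_le_sum fun i _ => hj0 i (Finset.mem_univ i)
      _ = n * (s j0) ^ 2 := by simp [Finset.sum_const, nsmul_eq_mul]
  have hj0τ : j0 ∈ τ := by
    simp only [τ, Finset.mem_filter, Finset.mem_univ, true_and, ge_iff_le]
    rw [div_le_iff₀ (by positivity)]
    linarith
  have hpos : 0 < ∑ j ∈ τ, (s j) ^ 2 := by
    refine Finset.sum_pos' (fun i _ => sq_nonneg _) ⟨j0, hj0τ, ?_⟩
    nlinarith [htot, hle, (hn : 0 < n)]
  rw [hdot] at hcomp
  linarith
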